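/- The rational function f(x₁,x₂) = (1 − x₁x₂) / ((1 − x₁)(1 − x₂)(1 − q x₁² x₂²)) has Taylor series expansion f(x₁,x₂) = Σ_{k,l≥0} a_{kl} x₁^k x₂^l, where a_{kl} = min(q^{k/2}, q^{l/2}) if min(k,l) is even, and a_{kl} = 0 if min(k,l) is odd. -/

import Mathlib

open MvPowerSeries Finsupp

private noncomputable def G (q : ℝ) (m : ℕ) : ℝ := if Even m then q ^ ((m : ℝ) / 2) else 0

private lemma G_zero (q : ℝ) : G q 0 = 1 := by simp [G]

private lemma G_one (q : ℝ) : G q 1 = 0 := by simp [G]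

private lemma G_step (q : ℝ) (hq : 1 ≤ q) (m : ℕ) : G q (m + 2) = q * G q m := by
  have hq0 : (0 : ℝ) < q := lt_of_lt_of_le one_pos hq
  unfold G
  by_cases h : Even m
  · rw [if_pos (by simpa [Nat.even_add] using h), if_pos h]
    have : ((m + 2 : ℕ) : ℝ) / 2 = (m : ℝ) / 2 + 1 := by push_cast; ring
    rw [this, Real.rpow_add hq0, Real.rpow_one]; ring
  · rw [if_neg (by simpa [Nat.even_add] using h), if_neg h, mul_zero]

private lemma key_le (q : ℝ) (hq : 1 ≤ q) (k l : ℕ) (hkl : k ≤ l) :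
    G q (min k l)
      - (if 1 ≤ k then G q (min (k - 1) l) else 0)
      - (if 1 ≤ l then G q (min k (l - 1)) else 0)
      + (if 1 ≤ k ∧ 1 ≤ l then G q (min (k - 1) (l - 1)) else 0)
      - (if 2 ≤ k ∧ 2 ≤ l then G q (min (k - 2) (l - 2)) * q else 0)
      + (if 3 ≤ k ∧ 2 ≤ l then G q (min (k - 3) (l - 2)) * q else 0)
      + (if 2 ≤ k ∧ 3 ≤ l then G q (min (k - 2) (l - 3)) * q else 0)
      - (if 3 ≤ k ∧ 3 ≤ l then G q (min (k - 3) (l - 3)) * q else 0)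
    = (if k = 0 ∧ l = 0 then 1 else 0) - (if k = 1 ∧ l = 1 then 1 else 0) := by
  rcases lt_or_eq_of_le hkl with hlt | rfl
  · rw [show min k l = k by omega, show min (k - 1) l = k - 1 by omega,
      show min k (l - 1) = k by omega, show min (k - 1) (l - 1) = k - 1 by omega,
      show min (k - 2) (l - 2) = k - 2 by omega, show min (k - 3) (l - 2) = k - 3 by omega,
      show min (k - 2) (l - 3) = k - 2 by omega, show min (k - 3) (l - 3) = k - 3 by omega]
    simp only [show (1 ≤ l) = True from eq_true (by omega),
      show (1 ≤ k ∧ 1 ≤ l) = (1 ≤ k) from propext (by omega),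
      show (2 ≤ k ∧ 2 ≤ l) = (2 ≤ k) from propext (by omega),
      show (3 ≤ k ∧ 2 ≤ l) = (3 ≤ k) from propext (by omega),
      show (2 ≤ k ∧ 3 ≤ l) = (2 ≤ k) from propext (by omega),
      show (3 ≤ k ∧ 3 ≤ l) = (3 ≤ k) from propext (by omega),
      show (k = 0 ∧ l = 0) = False from eq_false (by omega),
      show (k = 1 ∧ l = 1) = False from eq_false (by omega), and_true, if_true, if_false]
    split_ifs <;> ring_nf
  · rw [show min k k = k by omega, show min (k - 1) k = k - 1 by omega,
      show min k (k - 1) = k - 1 by omega, show min (k - 1) (k - 1) = k - 1 by omega,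
      show min (k - 2) (k - 2) = k - 2 by omega, show min (k - 3) (k - 2) = k - 3 by omega,
      show min (k - 2) (k - 3) = k - 3 by omega, show min (k - 3) (k - 3) = k - 3 by omega]
    simp only [show (1 ≤ k ∧ 1 ≤ k) = (1 ≤ k) from propext (by omega),
      show (2 ≤ k ∧ 2 ≤ k) = (2 ≤ k) from propext (by omega),
      show (3 ≤ k ∧ 2 ≤ k) = (3 ≤ k) from propext (by omega),
      show (2 ≤ k ∧ 3 ≤ k) = (3 ≤ k) from propext (by omega),
      show (3 ≤ k ∧ 3 ≤ k) = (3 ≤ k) from propext (by omega),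
      show (k = 0 ∧ k = 0) = (k = 0) from propext (by omega),
      show (k = 1 ∧ k = 1) = (k = 1) from propext (by omega)]
    rcases Nat.lt_or_ge k 4 with h4 | h4
    · interval_cases k <;>
        norm_num [G_zero, G_one, show (2:ℕ) - 2 = 0 by rfl, show (3:ℕ) - 2 = 1 by rfl,
          show (3:ℕ) - 3 = 0 by rfl, G_step q hq 0, G_step q hq 1]
    · obtain ⟨m, rfl⟩ : ∃ m, k = m + 4 := ⟨k - 4, by omega⟩
      rw [show m + 4 - 1 = m + 3 by omega, show m + 4 - 2 = m + 2 by omega,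
        show m + 4 - 3 = m + 1 by omega,
        show m + 4 = (m + 2) + 2 by omega, G_step q hq (m + 2),
        show m + 3 = (m + 1) + 2 by omega, G_step q hq (m + 1)]
      simp only [show (1 ≤ m + 1 + 2 + 1) = True from eq_true (by omega),
        show (2 ≤ m + 1 + 2 + 1) = True from eq_true (by omega),
        show (3 ≤ m + 1 + 2 + 1) = True from eq_true (by omega),
        show (m + 1 + 2 + 1 = 0) = False from eq_false (by omega),
        show (m + 1 + 2 + 1 = 1) = False from eq_false (by omega), if_true, if_false]
      ring

private lemma key (q : ℝ) (hq : 1 ≤ q) (k l : ℕ) :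
    G q (min k l)
      - (if 1 ≤ k then G q (min (k - 1) l) else 0)
      - (if 1 ≤ l then G q (min k (l - 1)) else 0)
      + (if 1 ≤ k ∧ 1 ≤ l then G q (min (k - 1) (l - 1)) else 0)
      - (if 2 ≤ k ∧ 2 ≤ l then G q (min (k - 2) (l - 2)) * q else 0)
      + (if 3 ≤ k ∧ 2 ≤ l then G q (min (k - 3) (l - 2)) * q else 0)
      + (if 2 ≤ k ∧ 3 ≤ l then G q (min (k - 2) (l - 3)) * q else 0)
      - (if 3 ≤ k ∧ 3 ≤ l then G q (min (k - 3) (l - 3)) * q else 0)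
    = (if k = 0 ∧ l = 0 then 1 else 0) - (if k = 1 ∧ l = 1 then 1 else 0) := by
  rcases le_total k l with h | h
  · exact key_le q hq k l h
  · have H := key_le q hq l k h
    rw [min_comm l k, min_comm (l - 1) k, min_comm l (k - 1), min_comm (l - 1) (k - 1),
      min_comm (l - 2) (k - 2), min_comm (l - 3) (k - 2), min_comm (l - 2) (k - 3),
      min_comm (l - 3) (k - 3)] at H
    simp only [and_comm] at H ⊢
    linarith [H]

theorem stmt_12 (q : ℝ) (hq : 1 ≤ q) (S : MvPowerSeries (Fin 2) ℝ)
    (hS : ∀ d : Fin 2 →₀ ℕ, MvPowerSeries.coeff d S =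
      if Even (min (d 0) (d 1)) then
        min (q ^ ((d 0 : ℝ) / 2)) (q ^ ((d 1 : ℝ) / 2)) else 0) :
    S * ((1 - MvPowerSeries.X 0) * (1 - MvPowerSeries.X 1) *
        (1 - MvPowerSeries.C q * MvPowerSeries.X 0 ^ 2 * MvPowerSeries.X 1 ^ 2)) =
      1 - MvPowerSeries.X 0 * MvPowerSeries.X 1 := by
  classical
  have hA : ∀ d : Fin 2 →₀ ℕ, MvPowerSeries.coeff d S = G q (min (d 0) (d 1)) := by
    intro d
    rw [hS d]
    unfold G
    congr 1
    rcases le_total (d 0) (d 1) with h | h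
    · rw [min_eq_left h, min_eq_left (Real.rpow_le_rpow_of_exponent_le hq
        (by have := (Nat.cast_le (α := ℝ)).2 h; linarith))]
    · rw [min_eq_right h, min_eq_right (Real.rpow_le_rpow_of_exponent_le hq
        (by have := (Nat.cast_le (α := ℝ)).2 h; linarith))]
  have hmon : ∀ (a b : ℕ) (c : ℝ), MvPowerSeries.C (σ := Fin 2) c * MvPowerSeries.X 0 ^ a *
      MvPowerSeries.X 1 ^ b = monomial (single 0 a + single 1 b) c := by
    intro a b c
    rw [X_pow_eq, X_pow_eq, ← monomial_zero_eq_C_apply, monomial_mul_monomial,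
      monomial_mul_monomial]
    simp
  have hD : (1 - MvPowerSeries.X (R := ℝ) 0) * (1 - MvPowerSeries.X 1) *
        (1 - MvPowerSeries.C (σ := Fin 2) q * MvPowerSeries.X 0 ^ 2 * MvPowerSeries.X 1 ^ 2)
      = monomial (single 0 0 + single 1 0) 1 - monomial (single 0 1 + single 1 0) 1
        - monomial (single 0 0 + single 1 1) 1 + monomial (single 0 1 + single 1 1) 1
        - monomial (single 0 2 + single 1 2) q + monomial (single 0 3 + single 1 2) q
        + monomial (single 0 2 + single 1 3) q - monomial (single 0 3 + single 1 3) q := by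
    simp only [← hmon, map_one, pow_zero, pow_one, mul_one, one_mul]
    ring
  have hXX : MvPowerSeries.X (R := ℝ) (0 : Fin 2) * MvPowerSeries.X 1
      = monomial (single 0 1 + single 1 1) 1 := by
    simpa using hmon 1 1 1
  apply MvPowerSeries.ext
  intro d
  have hcond : ∀ a b : ℕ, (single (0 : Fin 2) a + single 1 b ≤ d) ↔ (a ≤ d 0 ∧ b ≤ d 1) := by
    intro a b
    rw [Finsupp.le_def]
    constructor
    · intro h
      refine ⟨?_, ?_⟩
      · have := h 0; simpa [Finsupp.single_apply] using this
      · have := h 1; simpa [Finsupp.single_apply] using this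
    · intro h s
      fin_cases s <;> simp [Finsupp.single_apply, h.1, h.2]
  have hsub0 : ∀ a b : ℕ, ((d - (single (0 : Fin 2) a + single 1 b) : Fin 2 →₀ ℕ)) 0 = d 0 - a := by
    intro a b; simp [Finsupp.tsub_apply, Finsupp.single_apply]
  have hsub1 : ∀ a b : ℕ, ((d - (single (0 : Fin 2) a + single 1 b) : Fin 2 →₀ ℕ)) 1 = d 1 - b := by
    intro a b; simp [Finsupp.tsub_apply, Finsupp.single_apply]
  rw [hD, hXX]
  simp only [mul_sub, mul_add, map_sub, map_add, coeff_mul_monomial, coeff_one, coeff_monomial]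
  simp only [hcond, hA, hsub0, hsub1]
  simp only [show (d = 0) = (d 0 = 0 ∧ d 1 = 0) from propext
      (by rw [Finsupp.ext_iff, Fin.forall_fin_two]; simp),
    show (d = single (0 : Fin 2) 1 + single 1 1) = (d 0 = 1 ∧ d 1 = 1) from propext
      (by rw [Finsupp.ext_iff, Fin.forall_fin_two]; simp [Finsupp.single_apply])]
  simp only [Nat.zero_le, true_and, and_true, Nat.sub_zero, if_true, mul_one]
  linarith [key q hq (d 0) (d 1)]
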